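/- Let F : D → ℝ be a warping function whose weight w = (F⁻¹)′ satisfies w(x+y) ≤ C·w(x)·w(y) for all x,y ∈ ℝ with C ≥ 1, let 1 ≤ p ≤ ∞ and X = L^p_w(ℝ). Let δ > 0. If f ∈ X has support contained in [−δ,δ] and 0 ≤ ε ≤ 1/(2Cδw(δ)), then for every y ∈ ℝ: ‖f − E_{y,ε}f‖_X ≤ √(2 − 2·cos(2πε·C·δ·w(δ))) · ‖f‖_X. -/

import Mathlib

open MeasureTheory Filter Topology Set
open scoped ENNReal NNReal

noncomputable section

/-- A warping function `F : D → ℝ` (with `D = ℝ` or `D = (0,∞)`), bundled together with its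
inverse `Finv`, its derivative `F'` and the associated weight `w = (F⁻¹)'`.  The fields record:
bijectivity of `F : D → ℝ`, `F ∈ C¹(D)` with `F' > 0`, strict decrease of `F'` in `|t|`,
`w = (F⁻¹)'`, oddness of `F` when `D = ℝ`, and `v`-moderateness of `w` for some
submultiplicative weight `v`. -/
structure Warping where
  D : Set ℝ
  F : ℝ → ℝ
  Finv : ℝ → ℝ
  F' : ℝ → ℝ
  w : ℝ → ℝ
  hD : D = Set.univ ∨ D = Set.Ioi 0
  left_inv : ∀ x ∈ D, Finv (F x) = x
  mem_inv : ∀ s : ℝ, Finv s ∈ D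
  right_inv : ∀ s : ℝ, F (Finv s) = s
  F_hasDeriv : ∀ t ∈ D, HasDerivAt F (F' t) t
  F'_cont : ContinuousOn F' D
  F'_pos : ∀ t ∈ D, 0 < F' t
  F'_dec : ∀ t₀ ∈ D, ∀ t₁ ∈ D, |t₀| < |t₁| → F' t₁ < F' t₀
  w_hasDeriv : ∀ s : ℝ, HasDerivAt Finv (w s) s
  w_pos : ∀ s : ℝ, 0 < w s
  odd_of_univ : D = Set.univ → ∀ t, F (-t) = -F t
  moderate : ∃ (v : ℝ → ℝ) (C₀ : ℝ), (∀ x, 0 < v x) ∧ (∀ x y, v (x + y) ≤ v x * v y) ∧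
      ∀ x y, w (x + y) ≤ C₀ * v x * w y

/-- The frequency-side warped atom `g_x = √(F'(x)) · (T_{F(x)}θ) ∘ F` on `D`, extended by zero. -/
def gxFun (W : Warping) (θ : ℝ → ℂ) (x : ℝ) : ℝ → ℂ :=
  W.D.indicator fun t => (Real.sqrt (W.F' x) : ℂ) * θ (W.F t - W.F x)

/-- The Fourier transform of the warped time-frequency atom `g_{x,ξ} = T_ξ (ǧ_x)`:
`ĝ_{x,ξ}(t) = e^{-2πiξt} g_x(t)`. -/
def hatAtom (W : Warping) (θ : ℝ → ℂ) (x ξ : ℝ) : ℝ → ℂ := fun t =>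
  gxFun W θ x t * Complex.exp (-(2 * Real.pi * Complex.I * ξ * t))

/-- The warped time-frequency transform `V_{θ,F} f (x,ξ) = ⟨f, g_{x,ξ}⟩`, expressed on the
Fourier side (via Plancherel) in terms of `fh = f̂`:
`V_{θ,F} f (x,ξ) = ∫ f̂(t) conj(g_x(t)) e^{2πiξt} dt`. -/
def warpedTransform (W : Warping) (θ fh : ℝ → ℂ) (x ξ : ℝ) : ℂ :=
  ∫ t : ℝ, fh t * (starRingEnd ℂ) (gxFun W θ x t) * Complex.exp (2 * Real.pi * Complex.I * ξ * t)

/-- The operator `E_{y,ε}`: `(E_{y,ε}f)(t) = f(t) e^{2πiε(F⁻¹(t+y)−F⁻¹(y))/w(y)}`. -/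
def Eop (W : Warping) (y ε : ℝ) (f : ℝ → ℂ) : ℝ → ℂ := fun t =>
  f t * Complex.exp (2 * Real.pi * Complex.I * ε *
    (((W.Finv (t + y) - W.Finv y) / W.w y : ℝ) : ℂ))

namespace Warping
variable (W : Warping)

lemma finv_strictMono : StrictMono W.Finv :=
  strictMono_of_deriv_pos fun s => by
    rw [(W.w_hasDeriv s).deriv]; exact W.w_pos s

lemma F'_mul_w (s : ℝ) : W.F' (W.Finv s) * W.w s = 1 := by
  have h1 : HasDerivAt (fun t => W.F (W.Finv t)) (W.F' (W.Finv s) * W.w s) s :=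
    (W.F_hasDeriv _ (W.mem_inv s)).comp s (W.w_hasDeriv s)
  have h2 : HasDerivAt (fun t => W.F (W.Finv t)) 1 s := by
    have h : (fun t => W.F (W.Finv t)) = fun t : ℝ => t := funext W.right_inv
    rw [h]; exact hasDerivAt_id s
  exact h1.unique h2

lemma finv_neg (hU : W.D = Set.univ) (s : ℝ) : W.Finv (-s) = -W.Finv s := by
  have h1 : W.F (-(W.Finv s)) = -s := by rw [W.odd_of_univ hU, W.right_inv]
  have h2 : W.Finv (W.F (-(W.Finv s))) = -(W.Finv s) :=
    W.left_inv _ (by rw [hU]; trivial)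
  rw [h1] at h2; exact h2

lemma w_even (hU : W.D = Set.univ) (s : ℝ) : W.w (-s) = W.w s := by
  have h1 : HasDerivAt (fun t : ℝ => W.Finv (-t)) (W.w (-s) * (-1)) s :=
    (W.w_hasDeriv (-s)).comp s (hasDerivAt_neg s)
  have h2 : HasDerivAt (fun t : ℝ => W.Finv (-t)) (-W.w s) s := by
    have h : (fun t : ℝ => W.Finv (-t)) = fun t => -W.Finv t :=
      funext (W.finv_neg hU)
    rw [h]; exact (W.w_hasDeriv s).neg
  have := h1.unique h2; linarith

lemma w_le_of_abs_lt {a b : ℝ} (h : |W.Finv a| < |W.Finv b|) : W.w a ≤ W.w b := by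
  have hd := W.F'_dec _ (W.mem_inv a) _ (W.mem_inv b) h
  have ha := W.F'_pos _ (W.mem_inv a)
  have hb := W.F'_pos _ (W.mem_inv b)
  have h1 := W.F'_mul_w a
  have h2 := W.F'_mul_w b
  have hwa := W.w_pos a
  have hwb := W.w_pos b
  nlinarith

lemma w_le {a b : ℝ} (h : |a| ≤ b) : W.w a ≤ W.w b := by
  rcases W.hD with hU | hI
  · -- D = univ : w is even, Finv is odd with Finv 0 = 0
    have hz : W.Finv 0 = 0 := by
      have := W.finv_neg hU 0; rw [neg_zero] at this; linarith
    have key : ∀ a' : ℝ, 0 ≤ a' → a' ≤ b → W.w a' ≤ W.w b := by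
      intro a' h0 hab
      rcases eq_or_lt_of_le hab with rfl | hlt
      · exact le_refl _
      · apply W.w_le_of_abs_lt
        have hm := W.finv_strictMono hlt
        have h0' : 0 ≤ W.Finv a' := by
          rw [← hz]; exact (W.finv_strictMono.le_iff_le).2 h0
        rw [abs_of_nonneg h0', abs_of_pos (lt_of_le_of_lt h0' hm)]
        exact hm
    rcases le_or_gt 0 a with ha | ha
    · have := key a ha (by rwa [abs_of_nonneg ha] at h); exact this
    · rw [← W.w_even hU a]
      exact key (-a) (by linarith) (by rwa [abs_of_neg ha] at h)
  · -- D = Ioi 0 : Finv positive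
    have ha : 0 < W.Finv a := by have := W.mem_inv a; rwa [hI] at this
    have hb : 0 < W.Finv b := by have := W.mem_inv b; rwa [hI] at this
    have hab : a ≤ b := le_trans (le_abs_self a) h
    rcases eq_or_lt_of_le hab with rfl | hlt
    · exact le_refl _
    · apply W.w_le_of_abs_lt
      rw [abs_of_pos ha, abs_of_pos hb]
      exact W.finv_strictMono hlt

lemma finv_continuous : Continuous W.Finv := by
  have hd : Differentiable ℝ W.Finv := fun s => (W.w_hasDeriv s).differentiableAt
  exact hd.continuous

lemma finv_diff_le {C δ : ℝ} (hC : 1 ≤ C) (hδ : 0 < δ)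
    (hwsub : ∀ x y : ℝ, W.w (x + y) ≤ C * W.w x * W.w y)
    {t : ℝ} (y : ℝ) (ht : |t| ≤ δ) :
    |W.Finv (t + y) - W.Finv y| ≤ C * δ * W.w δ * W.w y := by
  have hwδ := W.w_pos δ
  have hwy := W.w_pos y
  have hRnn : 0 ≤ C * δ * W.w δ * W.w y := by positivity
  rcases lt_trichotomy t 0 with hneg | rfl | hpos
  · obtain ⟨c, hc, hslope⟩ := exists_hasDerivAt_eq_slope W.Finv W.w
      (by linarith : t + y < y) (W.finv_continuous.continuousOn)
      (fun x _ => W.w_hasDeriv x)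
    have hcy : |c - y| ≤ δ := by
      rw [abs_of_neg (by rcases hc with ⟨_, h2⟩; linarith)]
      rcases hc with ⟨h1, _⟩
      have : -t ≤ δ := by rw [abs_of_neg hneg] at ht; exact ht
      linarith
    have hwc : W.w c ≤ C * W.w δ * W.w y := by
      have h1 : W.w ((c - y) + y) ≤ C * W.w (c - y) * W.w y := hwsub _ _
      have h2 : W.w (c - y) ≤ W.w δ := W.w_le hcy
      have : (c - y) + y = c := by ring
      rw [this] at h1
      refine le_trans h1 ?_
      exact mul_le_mul_of_nonneg_right
        (mul_le_mul_of_nonneg_left h2 (by linarith)) hwy.le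
    have hne : y - (t + y) ≠ 0 := by intro h0; apply hneg.ne; linarith
    have heq : W.Finv (t + y) - W.Finv y = W.w c * t := by
      rw [hslope, div_mul_eq_mul_div, eq_div_iff hne]; ring
    rw [heq, abs_mul, abs_of_pos (W.w_pos c)]
    nlinarith [W.w_pos c]
  · simp [hRnn]
  · obtain ⟨c, hc, hslope⟩ := exists_hasDerivAt_eq_slope W.Finv W.w
      (by linarith : y < t + y) (W.finv_continuous.continuousOn)
      (fun x _ => W.w_hasDeriv x)
    have hcy : |c - y| ≤ δ := by
      rw [abs_of_pos (by rcases hc with ⟨h1, _⟩; linarith)]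
      rcases hc with ⟨_, h2⟩
      have : t ≤ δ := by rw [abs_of_pos hpos] at ht; exact ht
      linarith
    have hwc : W.w c ≤ C * W.w δ * W.w y := by
      have h1 : W.w ((c - y) + y) ≤ C * W.w (c - y) * W.w y := hwsub _ _
      have h2 : W.w (c - y) ≤ W.w δ := W.w_le hcy
      have : (c - y) + y = c := by ring
      rw [this] at h1
      refine le_trans h1 ?_
      exact mul_le_mul_of_nonneg_right
        (mul_le_mul_of_nonneg_left h2 (by linarith)) hwy.le
    have hne : t + y - y ≠ 0 := by intro h0; apply hpos.ne'; linarith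
    have heq : W.Finv (t + y) - W.Finv y = W.w c * t := by
      rw [hslope, div_mul_eq_mul_div, eq_div_iff hne]; ring
    rw [heq, abs_mul, abs_of_pos (W.w_pos c)]
    nlinarith [W.w_pos c]

end Warping

lemma abs_one_sub_exp_mul_I (θ : ℝ) :
    ‖1 - Complex.exp (θ * Complex.I)‖ = Real.sqrt (2 - 2 * Real.cos θ) := by
  rw [Complex.exp_mul_I]
  have h : (1 : ℂ) - (Complex.cos θ + Complex.sin θ * Complex.I)
      = ((1 - Real.cos θ : ℝ) : ℂ) + ((-Real.sin θ : ℝ) : ℂ) * Complex.I := by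
    push_cast [Complex.ofReal_cos, Complex.ofReal_sin]; ring
  rw [h, Complex.norm_add_mul_I]
  congr 1
  have := Real.sin_sq_add_cos_sq θ
  ring_nf
  nlinarith [this]

/-- Let `F : D → ℝ` be a warping function whose weight `w = (F⁻¹)'` satisfies
`w(x+y) ≤ C w(x) w(y)` with `C ≥ 1`, let `1 ≤ p ≤ ∞` and `X = L^p_w(ℝ)`, `δ > 0`.  If
`f ∈ X` is supported in `[−δ,δ]` and `0 ≤ ε ≤ 1/(2Cδw(δ))`, then for every `y ∈ ℝ`:
`‖f − E_{y,ε}f‖_X ≤ √(2 − 2cos(2πεCδw(δ))) ‖f‖_X`. -/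
theorem Eop_approx_identity
    (W : Warping) (C : ℝ) (hC : 1 ≤ C)
    (hwsub : ∀ x y : ℝ, W.w (x + y) ≤ C * W.w x * W.w y)
    (p : ℝ≥0∞) (hp : 1 ≤ p)
    (δ : ℝ) (hδ : 0 < δ)
    (f : ℝ → ℂ) (hf : MemLp (fun t : ℝ => W.w t • f t) p volume)
    (hsupp : Function.support f ⊆ Set.Icc (-δ) δ)
    (ε : ℝ) (hε0 : 0 ≤ ε) (hε : ε ≤ 1 / (2 * C * δ * W.w δ)) (y : ℝ) :
    eLpNorm (fun t : ℝ => W.w t • (f t - Eop W y ε f t)) p volume ≤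
      ENNReal.ofReal (Real.sqrt (2 - 2 * Real.cos (2 * Real.pi * ε * C * δ * W.w δ))) *
        eLpNorm (fun t : ℝ => W.w t • f t) p volume := by

  have hwδ := W.w_pos δ
  have hC0 : (0:ℝ) < C := lt_of_lt_of_le one_pos hC
  have hπ := Real.pi_pos
  set B : ℝ := 2 * Real.pi * ε * C * δ * W.w δ with hB
  have hBnn : 0 ≤ B := by
    rw [hB]; positivity
  have hBπ : B ≤ Real.pi := by
    have hden : (0:ℝ) < 2 * C * δ * W.w δ := by positivity
    have h1 : ε * (2 * C * δ * W.w δ) ≤ 1 := (le_div_iff₀ hden).1 hε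
    have h2 : B = Real.pi * (ε * (2 * C * δ * W.w δ)) := by rw [hB]; ring
    rw [h2]
    calc Real.pi * (ε * (2 * C * δ * W.w δ)) ≤ Real.pi * 1 :=
          mul_le_mul_of_nonneg_left h1 hπ.le
      _ = Real.pi := mul_one _
  set c : ℝ≥0 := Real.toNNReal (Real.sqrt (2 - 2 * Real.cos B)) with hc
  have hcr : (c : ℝ) = Real.sqrt (2 - 2 * Real.cos B) :=
    Real.coe_toNNReal _ (Real.sqrt_nonneg _)
  have hpt : ∀ t : ℝ, ‖W.w t • (f t - Eop W y ε f t)‖ ≤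
      (c : ℝ) * ‖W.w t • f t‖ := by
    intro t
    by_cases hft : f t = 0
    · simp [Eop, hft]
    · have htmem : t ∈ Set.Icc (-δ) δ := hsupp hft
      have ht : |t| ≤ δ := abs_le.2 ⟨htmem.1, htmem.2⟩
      set r : ℝ := (W.Finv (t + y) - W.Finv y) / W.w y with hr
      have hrb : |r| ≤ C * δ * W.w δ := by
        rw [hr, abs_div, abs_of_pos (W.w_pos y), div_le_iff₀ (W.w_pos y)]
        exact W.finv_diff_le hC hδ hwsub y ht
      have hφ : |2 * Real.pi * ε * r| ≤ B := by
        have h1 : |2 * Real.pi * ε * r| = 2 * Real.pi * ε * |r| := by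
          rw [abs_mul, abs_of_nonneg (by positivity : (0:ℝ) ≤ 2 * Real.pi * ε)]
        rw [h1, hB]
        have h2 : 2 * Real.pi * ε * C * δ * W.w δ
            = 2 * Real.pi * ε * (C * δ * W.w δ) := by ring
        rw [h2]
        exact mul_le_mul_of_nonneg_left hrb (by positivity)
      have hexp : Eop W y ε f t
          = f t * Complex.exp (((2 * Real.pi * ε * r : ℝ) : ℂ) * Complex.I) := by
        unfold Eop
        congr 2
        rw [hr, Complex.ofReal_mul, Complex.ofReal_mul, Complex.ofReal_mul]
        push_cast
        ring
      have hcos : Real.cos B ≤ Real.cos (2 * Real.pi * ε * r) := by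
        rw [← Real.cos_abs (2 * Real.pi * ε * r)]
        exact Real.cos_le_cos_of_nonneg_of_le_pi (abs_nonneg _) hBπ hφ
      have hnorm : ‖f t - Eop W y ε f t‖
          = ‖f t‖ * Real.sqrt (2 - 2 * Real.cos (2 * Real.pi * ε * r)) := by
        rw [hexp]
        have h3 : f t - f t * Complex.exp (((2 * Real.pi * ε * r : ℝ) : ℂ) * Complex.I)
            = f t * (1 - Complex.exp (((2 * Real.pi * ε * r : ℝ) : ℂ) * Complex.I)) := by
          ring
        rw [h3, norm_mul, abs_one_sub_exp_mul_I]
      rw [norm_smul, norm_smul, hnorm, hcr]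
      have hsq : Real.sqrt (2 - 2 * Real.cos (2 * Real.pi * ε * r))
          ≤ Real.sqrt (2 - 2 * Real.cos B) := Real.sqrt_le_sqrt (by linarith)
      have hnn1 : (0:ℝ) ≤ ‖W.w t‖ := norm_nonneg _
      have hnn2 : (0:ℝ) ≤ ‖f t‖ := norm_nonneg _
      calc ‖W.w t‖ * (‖f t‖ * Real.sqrt (2 - 2 * Real.cos (2 * Real.pi * ε * r)))
          ≤ ‖W.w t‖ * (‖f t‖ * Real.sqrt (2 - 2 * Real.cos B)) := by
            apply mul_le_mul_of_nonneg_left _ hnn1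
            exact mul_le_mul_of_nonneg_left hsq hnn2
        _ = Real.sqrt (2 - 2 * Real.cos B) * (‖W.w t‖ * ‖f t‖) := by ring
  have hptn : ∀ᵐ t ∂(volume : Measure ℝ),
      ‖W.w t • (f t - Eop W y ε f t)‖₊ ≤ c * ‖W.w t • f t‖₊ := by
    refine Eventually.of_forall fun t => ?_
    rw [← NNReal.coe_le_coe]
    push_cast
    exact hpt t
  have key := eLpNorm_le_nnreal_smul_eLpNorm_of_ae_le_mul hptn p
  refine le_trans key (le_of_eq ?_)
  rw [ENNReal.smul_def, smul_eq_mul]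
  congr 1
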